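/- With m,n ≥ 2, in O_q(M_{m,n})[X_{1n}⁻¹] with X'_{ij} = X_{ij} − q⁻¹X_{1j}X_{in}X_{1n}⁻¹, for 1 ≤ j ≤ n−1 and 2 ≤ k ≤ m one has: X_{1j}X'_{kl} − X'_{kl}X_{1j} = (q⁻¹−q)X_{1l}X'_{kj} for 1 ≤ l < j; X_{1j}X'_{kj} = q⁻¹X'_{kj}X_{1j}; and X_{1j}X'_{kl} = X'_{kl}X_{1j} for j < l ≤ n−1. -/
import Mathlib


noncomputable section
open scoped BigOperators

/-- The defining relations of an `m × n` `q`-quantum matrix. -/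
def IsQMat {k A : Type*} [Field k] [Ring A] [Algebra k A] (q : k) {m n : ℕ}
    (X : Fin m → Fin n → A) : Prop :=
  (∀ (i : Fin m) (j l : Fin n), j < l → X i j * X i l = q • (X i l * X i j)) ∧
  (∀ (i r : Fin m) (j : Fin n), i < r → X i j * X r j = q • (X r j * X i j)) ∧
  (∀ (i r : Fin m) (j l : Fin n), i < r → j < l → X i l * X r j = X r j * X i l) ∧
  (∀ (i r : Fin m) (j l : Fin n), i < r → j < l →
    X i j * X r l - X r l * X i j = (q - q⁻¹) • (X i l * X r j))

/-- The relations defining `O_q(M_{m,n})` as a quotient of the free algebra. -/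
inductive QMRel (k : Type*) [Field k] (q : k) (m n : ℕ) :
    FreeAlgebra k (Fin m × Fin n) → FreeAlgebra k (Fin m × Fin n) → Prop
  | row (i : Fin m) (j l : Fin n) (h : j < l) :
      QMRel k q m n (FreeAlgebra.ι k (i, j) * FreeAlgebra.ι k (i, l))
        (q • (FreeAlgebra.ι k (i, l) * FreeAlgebra.ι k (i, j)))
  | col (i r : Fin m) (j : Fin n) (h : i < r) :
      QMRel k q m n (FreeAlgebra.ι k (i, j) * FreeAlgebra.ι k (r, j))
        (q • (FreeAlgebra.ι k (r, j) * FreeAlgebra.ι k (i, j)))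
  | anti (i r : Fin m) (j l : Fin n) (h1 : i < r) (h2 : j < l) :
      QMRel k q m n (FreeAlgebra.ι k (i, l) * FreeAlgebra.ι k (r, j))
        (FreeAlgebra.ι k (r, j) * FreeAlgebra.ι k (i, l))
  | diag (i r : Fin m) (j l : Fin n) (h1 : i < r) (h2 : j < l) :
      QMRel k q m n (FreeAlgebra.ι k (i, j) * FreeAlgebra.ι k (r, l))
        (FreeAlgebra.ι k (r, l) * FreeAlgebra.ι k (i, j) +
          (q - q⁻¹) • (FreeAlgebra.ι k (i, l) * FreeAlgebra.ι k (r, j)))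

/-- The quantum matrix algebra `O_q(M_{m,n})`. -/
abbrev OqM (k : Type*) [Field k] (q : k) (m n : ℕ) := RingQuot (QMRel k q m n)

/-- The canonical generators `X_{ij}` of `O_q(M_{m,n})`. -/
def qX (k : Type*) [Field k] (q : k) (m n : ℕ) (i : Fin m) (j : Fin n) : OqM k q m n :=
  RingQuot.mkAlgHom k (QMRel k q m n) (FreeAlgebra.ι k (i, j))

/-- The number of inversions (the length `ℓ(σ)`) of a permutation of `Fin t`. -/
def invCount {t : ℕ} (σ : Equiv.Perm (Fin t)) : ℕ :=
  Finset.card (Finset.univ.filter (fun p : Fin t × Fin t => p.1 < p.2 ∧ σ p.2 < σ p.1))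

/-- The quantum determinant of a `t × t` matrix with entries in an algebra:
`Σ_σ (-q)^{ℓ(σ)} M_{1,σ(1)} ⋯ M_{t,σ(t)}`. -/
def qdet {k : Type*} [Field k] {A : Type*} [Ring A] [Algebra k A] (q : k) {t : ℕ}
    (M : Fin t → Fin t → A) : A :=
  ∑ σ : Equiv.Perm (Fin t), ((-q) ^ invCount σ) • (List.ofFn (fun i => M i (σ i))).prod

/-- The quantum minor `[I|J]` of the matrix `X` on rows `I` and columns `J`. -/
def qminor {k : Type*} [Field k] {A : Type*} [Ring A] [Algebra k A] (q : k) {m n t : ℕ}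
    (X : Fin m → Fin n → A) (I : Finset (Fin m)) (J : Finset (Fin n))
    (hI : I.card = t) (hJ : J.card = t) : A :=
  qdet q (fun a b => X (I.orderIsoOfFin hI a) (J.orderIsoOfFin hJ b))

/-- The elements `X'_{ij} = X_{ij} - q⁻¹ X_{1j} X_{in} X_{1n}⁻¹` in a localisation of
`O_q(M_{m,n})` at the normal element `X_{1n}`, where `φ` is the localisation map and
`u = X_{1n}⁻¹`. -/
def Xp {k B : Type*} [Field k] [Ring B] [Algebra k B] (q : k) {m n : ℕ}
    (hm : 0 < m) (hn : 0 < n) (φ : OqM k q m n →ₐ[k] B) (u : B)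
    (i : Fin m) (j : Fin n) : B :=
  φ (qX k q m n i j) -
    q⁻¹ • (φ (qX k q m n ⟨0, hm⟩ j) * φ (qX k q m n i ⟨n - 1, by omega⟩) * u)


private lemma move_one' {B : Type*} [Ring B] {x y : B} (h : x * y = 1) (t : B) :
    x * (y * t) = t := by
  rw [← mul_assoc, h, one_mul]

private lemma move_smul' {k B : Type*} [Field k] [Ring B] [Algebra k B] {c : k}
    {x y z₁ z₂ : B} (h : x * y = c • (z₁ * z₂)) (t : B) :
    x * (y * t) = c • (z₁ * (z₂ * t)) := by
  rw [← mul_assoc, h, smul_mul_assoc, mul_assoc]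

private lemma move_eq'' {B : Type*} [Ring B] {x y z₁ z₂ : B} (h : x * y = z₁ * z₂) (t : B) :
    x * (y * t) = z₁ * (z₂ * t) := by
  rw [← mul_assoc, h, mul_assoc]

private lemma move_add' {k B : Type*} [Field k] [Ring B] [Algebra k B] {c : k}
    {x y z₁ z₂ z₃ z₄ : B} (h : x * y = z₁ * z₂ + c • (z₃ * z₄)) (t : B) :
    x * (y * t) = z₁ * (z₂ * t) + c • (z₃ * (z₄ * t)) := by
  rw [← mul_assoc, h, add_mul, smul_mul_assoc, mul_assoc, mul_assoc]

set_option linter.unreachableTactic false in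
set_option linter.unusedTactic false in
private lemma aux_main {k B : Type*} [Field k] [Ring B] [Algebra k B]
    (q p : k) (hp : q * p = 1) (hp' : p * q = 1)
    {n : ℕ} (a w : Fin n → B) (u : B) (ν j : Fin n)
    (f1 : ∀ {i l : Fin n}, i < l → a i * a l = q • (a l * a i))
    (f2 : ∀ l : Fin n, a l * w l = q • (w l * a l))
    (f3 : ∀ {i l : Fin n}, i < l → a l * w i = w i * a l)
    (f4 : ∀ {i l : Fin n}, i < l → a i * w l = w l * a i + (q - p) • (a l * w i))
    (U1 : a ν * u = 1) (U2 : u * a ν = 1) (hjν : j < ν) :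
    (∀ l, l < j → a j * (w l - p • (a l * w ν * u)) - (w l - p • (a l * w ν * u)) * a j
        = (p - q) • (a l * (w j - p • (a j * w ν * u)))) ∧
    (a j * (w j - p • (a j * w ν * u)) = p • ((w j - p • (a j * w ν * u)) * a j)) ∧
    (∀ l, j < l → l < ν → a j * (w l - p • (a l * w ν * u))
        = (w l - p • (a l * w ν * u)) * a j) := by
  have cancel : ∀ {x y : B}, x = q • y → y = p • x := by
    intro x y h; rw [h, smul_smul, hp', one_smul]
  have U3 : ∀ {i : Fin n}, i < ν → u * a i = q • (a i * u) := by
    intro i hi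
    calc u * a i = u * (a i * (a ν * u)) := by rw [U1, mul_one]
      _ = u * (q • (a ν * (a i * u))) := by rw [move_smul' (f1 hi)]
      _ = q • (u * (a ν * (a i * u))) := by rw [mul_smul_comm]
      _ = q • (a i * u) := by rw [move_one' U2]
  have U3' : ∀ {i : Fin n}, i < ν → a i * u = p • (u * a i) := fun hi => cancel (U3 hi)
  have m2 : ∀ {i : Fin n}, i < ν → a ν * (w i * u) = w i := by
    intro i hi
    rw [move_eq'' (f3 hi), U1, mul_one]
  have g3 : a j * (w ν * u) = p • (w ν * (u * a j)) + (q - p) • w j := by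
    rw [move_add' (f4 hjν), m2 hjν, U3' hjν, mul_smul_comm]
  refine ⟨?_, ?_, ?_⟩
  · -- l < j
    intro l hlj
    have g1 : a j * w l = w l * a j := f3 hlj
    have e1 : a j * a l = p • (a l * a j) := cancel (f1 hlj)
    have g2 : a j * (a l * (w ν * u)) = p • (a l * (a j * (w ν * u))) :=
      move_smul' e1 _
    rw [mul_assoc (a l) (w ν) u, mul_assoc (a j) (w ν) u]
    rw [mul_sub, sub_mul, g1, mul_smul_comm, g2, g3]
    rw [smul_mul_assoc, mul_assoc (a l), mul_assoc (w ν)]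
    simp only [mul_add, mul_sub, mul_smul_comm, smul_add, smul_sub, smul_smul]
    match_scalars <;> first
      | ring1
      | linear_combination (-p) * hp
      | linear_combination (p - q) * hp
      | linear_combination p * hp
      | linear_combination ((p - q) * (1 + p * q)) * hp
  · -- l = j
    have hX : a j * (w ν * (u * a j))
        = q • (a j * (a j * (w ν * u))) - (q * q * (q - p)) • (w j * a j) := by
      rw [U3 hjν, mul_smul_comm, mul_smul_comm]
      have m3' : w ν * (a j * u) = a j * (w ν * u) - (q - p) • (a ν * (w j * u)) := by
        rw [eq_sub_iff_add_eq, ← move_add' (f4 hjν)]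
      rw [m3', m2 hjν, mul_sub, mul_smul_comm, f2 j]
      match_scalars <;> first
        | ring1
        | linear_combination (-p) * hp
        | linear_combination (p - q) * hp
        | linear_combination p * hp
        | linear_combination ((p - q) * (1 + p * q)) * hp
    rw [mul_assoc (a j) (w ν) u]
    rw [mul_sub, sub_mul, f2 j]
    rw [smul_mul_assoc, mul_assoc (a j), mul_assoc (w ν), hX, mul_smul_comm]
    simp only [mul_add, mul_sub, mul_smul_comm, smul_add, smul_sub, smul_smul]
    match_scalars <;> first
      | ring1
      | linear_combination (-p) * hp
      | linear_combination (p - q) * hp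
      | linear_combination p * hp
      | linear_combination ((p - q) * (1 + p * q)) * hp
  · -- j < l < ν
    intro l hjl hlν
    have g1 : a j * w l = w l * a j + (q - p) • (a l * w j) := f4 hjl
    have g2 : a j * (a l * (w ν * u)) = q • (a l * (a j * (w ν * u))) :=
      move_smul' (f1 hjl) _
    rw [mul_assoc (a l) (w ν) u, mul_sub, sub_mul, g1, mul_smul_comm, g2, g3]
    rw [smul_mul_assoc, mul_assoc (a l), mul_assoc (w ν)]
    simp only [mul_add, mul_sub, mul_smul_comm, smul_add, smul_sub, smul_smul]
    match_scalars <;> first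
      | ring1
      | linear_combination (-p) * hp
      | linear_combination (p - q) * hp
      | linear_combination p * hp
      | linear_combination ((p - q) * (1 + p * q)) * hp

private lemma oqm_rel {k B : Type*} [Field k] [Ring B] [Algebra k B] (q : k) {m n : ℕ}
    (φ : OqM k q m n →ₐ[k] B) : IsQMat q (fun i j => φ (qX k q m n i j)) := by
  refine ⟨fun i j l h => ?_, fun i r j h => ?_, fun i r j l h1 h2 => ?_,
    fun i r j l h1 h2 => ?_⟩
  · have hrel := RingQuot.mkAlgHom_rel k (QMRel.row (k := k) (q := q) i j l h)
    simpa only [qX, map_mul, map_smul] using congrArg φ hrel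
  · have hrel := RingQuot.mkAlgHom_rel k (QMRel.col (k := k) (q := q) i r j h)
    simpa only [qX, map_mul, map_smul] using congrArg φ hrel
  · have hrel := RingQuot.mkAlgHom_rel k (QMRel.anti (k := k) (q := q) i r j l h1 h2)
    simpa only [qX, map_mul] using congrArg φ hrel
  · have hrel := RingQuot.mkAlgHom_rel k (QMRel.diag (k := k) (q := q) i r j l h1 h2)
    rw [sub_eq_iff_eq_add]
    simpa only [qX, map_mul, map_smul, map_add, add_comm] using congrArg φ hrel

/-- Relations between the first-row generators `X_{1j}` and the elements `X'_{kl}` in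
`O_q(M_{m,n})[X_{1n}⁻¹]` (one-based: `1 ≤ j ≤ n-1`, `2 ≤ k ≤ m`). -/
theorem relations_first_row_with_xprime {k B : Type*} [Field k] [Ring B] [Algebra k B]
    (q : k) (hq : q ≠ 0) {m n : ℕ} (hm : 2 ≤ m) (hn : 2 ≤ n)
    (φ : OqM k q m n →ₐ[k] B) (hφ : Function.Injective φ) (u : B)
    (hu1 : φ (qX k q m n ⟨0, by omega⟩ ⟨n - 1, by omega⟩) * u = 1)
    (hu2 : u * φ (qX k q m n ⟨0, by omega⟩ ⟨n - 1, by omega⟩) = 1)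
    (hloc : ∀ b : B, ∃ (a : OqM k q m n) (p : ℕ), b = φ a * u ^ p)
    (j : Fin n) (hj : (j : ℕ) < n - 1) (r : Fin m) (hr : 1 ≤ (r : ℕ)) :
    (∀ l : Fin n, (l : ℕ) < (j : ℕ) →
        φ (qX k q m n ⟨0, by omega⟩ j) * Xp q (by omega) (by omega) φ u r l
            - Xp q (by omega) (by omega) φ u r l * φ (qX k q m n ⟨0, by omega⟩ j)
          = (q⁻¹ - q) • (φ (qX k q m n ⟨0, by omega⟩ l) *
              Xp q (by omega) (by omega) φ u r j)) ∧
    (φ (qX k q m n ⟨0, by omega⟩ j) * Xp q (by omega) (by omega) φ u r j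
        = q⁻¹ • (Xp q (by omega) (by omega) φ u r j * φ (qX k q m n ⟨0, by omega⟩ j))) ∧
    (∀ l : Fin n, (j : ℕ) < (l : ℕ) → (l : ℕ) < n - 1 →
        φ (qX k q m n ⟨0, by omega⟩ j) * Xp q (by omega) (by omega) φ u r l
          = Xp q (by omega) (by omega) φ u r l * φ (qX k q m n ⟨0, by omega⟩ j)) := by
  have h0m : 0 < m := by omega
  have h0n : 0 < n := by omega
  have hn1 : n - 1 < n := by omega
  obtain ⟨R1, R2, R3, R4⟩ := oqm_rel (B := B) q φ
  have hzr : (⟨0, h0m⟩ : Fin m) < r := hr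
  have hjν : j < (⟨n - 1, hn1⟩ : Fin n) := hj
  have f4 : ∀ {i l : Fin n}, i < l →
      φ (qX k q m n ⟨0, h0m⟩ i) * φ (qX k q m n r l)
        = φ (qX k q m n r l) * φ (qX k q m n ⟨0, h0m⟩ i) +
          (q - q⁻¹) • (φ (qX k q m n ⟨0, h0m⟩ l) * φ (qX k q m n r i)) := by
    intro i l h
    have h2 := R4 ⟨0, h0m⟩ r i l hzr h
    rw [sub_eq_iff_eq_add] at h2
    rw [h2, add_comm]
  have key := aux_main (B := B) q q⁻¹ (mul_inv_cancel₀ hq) (inv_mul_cancel₀ hq)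
    (fun l => φ (qX k q m n ⟨0, h0m⟩ l)) (fun l => φ (qX k q m n r l)) u
    ⟨n - 1, hn1⟩ j
    (fun {i l} h => R1 ⟨0, h0m⟩ i l h)
    (fun l => R2 ⟨0, h0m⟩ r l hzr)
    (fun {i l} h => R3 ⟨0, h0m⟩ r i l hzr h)
    (fun {i l} h => f4 h)
    hu1 hu2 hjν
  exact ⟨fun l hl => key.1 l hl, key.2.1, fun l h1 h2 => key.2.2 l h1 h2⟩
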